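/- For M with 0.42 ≤ M ≤ L₀ (where L₀ ≈ 5.0177 is the largest root of e^L = 6L²) and for all λ with 0.42 ≤ |λ| ≤ M: e^{|λ|}·(1 - exp(-6λ²))/(6λ²) ≤ 1. -/

import Mathlib

open Real Set

/-- For `y ≤ 0`, `exp y ≤ 1 + y + y²/2`. -/
lemma expP2_aux {y : ℝ} (hy : y ≤ 0) : Real.exp y ≤ 1 + y + y ^ 2 / 2 := by
  have H : ∀ z : ℝ, HasDerivAt (fun w : ℝ => 1 + w + w ^ 2 / 2 - Real.exp w)
      (1 + z - Real.exp z) z := by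
    intro z
    have h1 : HasDerivAt (fun w : ℝ => w ^ 2) (2 * z) z := by
      simpa using hasDerivAt_pow 2 z
    have h2 := (((hasDerivAt_const z (1:ℝ)).add (hasDerivAt_id z)).add
      (h1.div_const 2)).sub (Real.hasDerivAt_exp z)
    exact h2.congr_deriv (by ring)
  have hanti : Antitone (fun w : ℝ => 1 + w + w ^ 2 / 2 - Real.exp w) := by
    apply antitone_of_hasDerivAt_nonpos H
    intro z
    have := Real.add_one_le_exp z
    simp only [Pi.zero_apply]
    linarith
  have := hanti hy
  simp only [Real.exp_zero] at this
  linarith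

/-- For `y ≤ 0`, `1 + y + y²/2 + y³/6 ≤ exp y`. -/
lemma expP3_aux {y : ℝ} (hy : y ≤ 0) : 1 + y + y ^ 2 / 2 + y ^ 3 / 6 ≤ Real.exp y := by
  have H : ∀ z : ℝ, HasDerivAt (fun w : ℝ => Real.exp w - (1 + w + w ^ 2 / 2 + w ^ 3 / 6))
      (Real.exp z - (1 + z + z ^ 2 / 2)) z := by
    intro z
    have h1 : HasDerivAt (fun w : ℝ => w ^ 2) (2 * z) z := by
      simpa using hasDerivAt_pow 2 z
    have h3 : HasDerivAt (fun w : ℝ => w ^ 3) (3 * z ^ 2) z := by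
      simpa using hasDerivAt_pow 3 z
    have h2 := (Real.hasDerivAt_exp z).sub
      ((((hasDerivAt_const z (1:ℝ)).add (hasDerivAt_id z)).add (h1.div_const 2)).add
        (h3.div_const 6))
    exact h2.congr_deriv (by ring)
  have hanti : AntitoneOn (fun w : ℝ => Real.exp w - (1 + w + w ^ 2 / 2 + w ^ 3 / 6))
      (Set.Iic 0) := by
    apply antitoneOn_of_hasDerivWithinAt_nonpos (convex_Iic 0)
      (fun z _ => ((Real.continuous_exp.sub (by continuity)).continuousAt).continuousWithinAt)
      (fun z hz => (H z).hasDerivWithinAt)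
    intro z hz
    rw [interior_Iic] at hz
    have := expP2_aux (le_of_lt hz)
    linarith
  have := hanti hy (Set.mem_Iic.mpr le_rfl) hy
  simp only [Real.exp_zero] at this
  linarith

set_option maxHeartbeats 1600000 in
/-- Key polynomial inequality for the small-`x` case. -/
lemma keypoly_aux {u : ℝ} (h1 : (0.1764:ℝ) ≤ u) (h2 : u ≤ 0.4225) :
    (1 - (1 - 3 * u + 9 * u ^ 2 / 2 - 27 * u ^ 3 / 6) ^ 2) * 1.06 ≤
      6 * u * (1 + u / 2) * 1.06 - (u + 0.2809) * (6 * u * (1 + u / 6)) := by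
  have p1 : (0:ℝ) ≤ u - 0.1764 := by linarith
  have p2 : (0:ℝ) ≤ 0.4225 - u := by linarith
  have e : (6 * u * (1 + u / 2) * 1.06 - (u + 0.2809) * (6 * u * (1 + u / 6)) -
      (1 - (1 - 3 * u + 9 * u ^ 2 / 2 - 27 * u ^ 3 / 6) ^ 2) * 1.06) * 44432390357049901752200 =
      (5355146994780793384194048:ℝ) * ((0.4225 - u) ^ 6) +
      (91698801292561108226611200:ℝ) * ((u - 0.1764) ^ 1 * (0.4225 - u) ^ 5) +
      (409199222126201652287200000:ℝ) * ((u - 0.1764) ^ 2 * (0.4225 - u) ^ 4) +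
      (782726863402720355540000000:ℝ) * ((u - 0.1764) ^ 3 * (0.4225 - u) ^ 3) +
      (745961696478640621218750000:ℝ) * ((u - 0.1764) ^ 4 * (0.4225 - u) ^ 2) +
      (350527469768795625859375000:ℝ) * ((u - 0.1764) ^ 5 * (0.4225 - u) ^ 1) +
      (65390810123468098876953125:ℝ) * ((u - 0.1764) ^ 6) := by ring
  have t0 : (0:ℝ) ≤ (5355146994780793384194048:ℝ) * ((0.4225 - u) ^ 6) := mul_nonneg (by norm_num) (pow_nonneg p2 6)
  have t1 : (0:ℝ) ≤ (91698801292561108226611200:ℝ) * ((u - 0.1764) ^ 1 * (0.4225 - u) ^ 5) := mul_nonneg (by norm_num) (mul_nonneg (pow_nonneg p1 1) (pow_nonneg p2 5))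
  have t2 : (0:ℝ) ≤ (409199222126201652287200000:ℝ) * ((u - 0.1764) ^ 2 * (0.4225 - u) ^ 4) := mul_nonneg (by norm_num) (mul_nonneg (pow_nonneg p1 2) (pow_nonneg p2 4))
  have t3 : (0:ℝ) ≤ (782726863402720355540000000:ℝ) * ((u - 0.1764) ^ 3 * (0.4225 - u) ^ 3) := mul_nonneg (by norm_num) (mul_nonneg (pow_nonneg p1 3) (pow_nonneg p2 3))
  have t4 : (0:ℝ) ≤ (745961696478640621218750000:ℝ) * ((u - 0.1764) ^ 4 * (0.4225 - u) ^ 2) := mul_nonneg (by norm_num) (mul_nonneg (pow_nonneg p1 4) (pow_nonneg p2 2))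
  have t5 : (0:ℝ) ≤ (350527469768795625859375000:ℝ) * ((u - 0.1764) ^ 5 * (0.4225 - u) ^ 1) := mul_nonneg (by norm_num) (mul_nonneg (pow_nonneg p1 5) (pow_nonneg p2 1))
  have t6 : (0:ℝ) ≤ (65390810123468098876953125:ℝ) * ((u - 0.1764) ^ 6) := mul_nonneg (by norm_num) (pow_nonneg p1 6)
  linarith [e, t0, t1, t2, t3, t4, t5, t6]

set_option maxHeartbeats 1600000 in
theorem fill_janson_K12_case (L₀ : ℝ)
    (hroot : Real.exp L₀ = 6 * L₀ ^ 2)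
    (hmax : ∀ L : ℝ, Real.exp L = 6 * L ^ 2 → L ≤ L₀) :
    ∀ M : ℝ, 0.42 ≤ M → M ≤ L₀ →
      ∀ l : ℝ, 0.42 ≤ |l| → |l| ≤ M →
        Real.exp |l| * (1 - Real.exp (-(6 * l ^ 2))) / (6 * l ^ 2) ≤ 1 := by
  -- numeric bounds on exp
  have he1lt : Real.exp 1 < 2.7182818286 := Real.exp_one_lt_d9
  have he1gt : (2.7182818283 : ℝ) < Real.exp 1 := Real.exp_one_gt_d9
  -- step 1 : 5 ≤ L₀
  have hL5 : (5 : ℝ) ≤ L₀ := by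
    have hcont : ContinuousOn (fun x : ℝ => Real.exp x - 6 * x ^ 2) (Set.Icc 5 6) :=
      (Real.continuous_exp.sub (by continuity)).continuousOn
    have hsub := intermediate_value_Icc (by norm_num : (5:ℝ) ≤ 6) hcont
    have hexp5 : Real.exp 5 < 150 := by
      have : Real.exp 5 = Real.exp 1 ^ 5 := by
        rw [← Real.exp_nat_mul]; norm_num
      rw [this]
      calc Real.exp 1 ^ 5 < 2.7182818286 ^ 5 := by
            apply pow_lt_pow_left₀ he1lt (le_of_lt (Real.exp_pos 1))
            norm_num
        _ < 150 := by norm_num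
    have hexp6 : (216 : ℝ) < Real.exp 6 := by
      have : Real.exp 6 = Real.exp 1 ^ 6 := by
        rw [← Real.exp_nat_mul]; norm_num
      rw [this]
      calc (216 : ℝ) < 2.7182818283 ^ 6 := by norm_num
        _ < Real.exp 1 ^ 6 := by
            apply pow_lt_pow_left₀ he1gt (by norm_num)
            norm_num
    have h0mem : (0 : ℝ) ∈ Set.Icc (Real.exp 5 - 6 * 5 ^ 2) (Real.exp 6 - 6 * 6 ^ 2) := by
      constructor <;> [linarith [hexp5]; linarith [hexp6]] 
    obtain ⟨c, hc_mem, hc⟩ := hsub h0mem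
    have hc' : Real.exp c = 6 * c ^ 2 := by
      have : Real.exp c - 6 * c ^ 2 = 0 := hc
      linarith
    have := hmax c hc'
    linarith [hc_mem.1]
  intro M hM1 hM2 l hl1 hl2
  have hx0 : (0:ℝ) < |l| := lt_of_lt_of_le (by norm_num) hl1
  have hl0 : l ≠ 0 := by
    intro h; rw [h, abs_zero] at hx0; exact lt_irrefl 0 hx0
  have ht : (0:ℝ) < 6 * l ^ 2 := by positivity
  rw [div_le_one ht, ← sq_abs l]
  set x := |l| with hxdef
  have hxL : x ≤ L₀ := le_trans hl2 hM2
  have hx42 : (0.42 : ℝ) ≤ x := hl1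
  -- helper to finish a case from exp x ≤ 6 x^2
  have finish_from : Real.exp x ≤ 6 * x ^ 2 →
      Real.exp x * (1 - Real.exp (-(6 * x ^ 2))) ≤ 6 * x ^ 2 := by
    intro h
    have h1 : (0:ℝ) < Real.exp (-(6 * x ^ 2)) := Real.exp_pos _
    nlinarith [Real.exp_pos x, mul_pos (Real.exp_pos x) h1]
  rcases le_or_gt x 0.65 with hcase | hcase
  · -- Case A : 0.42 ≤ x ≤ 0.65
    have hP : 1 - x + x ^ 2 / 2 - x ^ 3 / 6 ≤ Real.exp (-x) := by
      have := expP3_aux (y := -x) (by linarith)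
      convert this using 1 <;> ring
    have hPpos : (0:ℝ) < 1 - x + x ^ 2 / 2 - x ^ 3 / 6 := by nlinarith
    have hxP : Real.exp x * (1 - x + x ^ 2 / 2 - x ^ 3 / 6) ≤ 1 := by
      have h1 : Real.exp x * Real.exp (-x) = 1 := by
        rw [← Real.exp_add]; simp
      calc Real.exp x * (1 - x + x ^ 2 / 2 - x ^ 3 / 6)
          ≤ Real.exp x * Real.exp (-x) :=
            mul_le_mul_of_nonneg_left hP (le_of_lt (Real.exp_pos x))
        _ = 1 := h1
    -- Q := P3(-3x^2)
    have hQ : 1 - 3 * x ^ 2 + 9 * x ^ 4 / 2 - 27 * x ^ 6 / 6 ≤ Real.exp (-(3 * x ^ 2)) := by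
      have := expP3_aux (y := -(3 * x ^ 2)) (by nlinarith)
      convert this using 1 <;> ring
    have hu2 : x ^ 2 ≤ 0.4225 := by nlinarith
    have hu1 : (0.1764:ℝ) ≤ x ^ 2 := by nlinarith
    have hQpos : (0:ℝ) ≤ 1 - 3 * x ^ 2 + 9 * x ^ 4 / 2 - 27 * x ^ 6 / 6 := by
      nlinarith [sq_nonneg (x ^ 2 - 1/3), mul_nonneg (mul_nonneg (sq_nonneg x) (sq_nonneg x))
        (sub_nonneg.mpr hu2), sq_nonneg (x ^ 2 - 0.577), sq_nonneg x]
    have hQsq : (1 - 3 * x ^ 2 + 9 * x ^ 4 / 2 - 27 * x ^ 6 / 6) ^ 2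
        ≤ Real.exp (-(6 * x ^ 2)) := by
      have heq : Real.exp (-(6 * x ^ 2)) =
          Real.exp (-(3 * x ^ 2)) * Real.exp (-(3 * x ^ 2)) := by
        rw [← Real.exp_add]; ring_nf
      rw [heq, sq]
      exact mul_le_mul hQ hQ hQpos (le_of_lt (Real.exp_pos _))
    set Q := 1 - 3 * x ^ 2 + 9 * x ^ 4 / 2 - 27 * x ^ 6 / 6 with hQdef
    set P := 1 - x + x ^ 2 / 2 - x ^ 3 / 6 with hPdef
    -- key polynomial inequality
    have hxb : 1.06 * x ≤ x ^ 2 + 0.2809 := by nlinarith [sq_nonneg (x - 0.53)]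
    have hmul := mul_le_mul_of_nonneg_right hxb
      (by positivity : (0:ℝ) ≤ 6 * x ^ 2 * (1 + x ^ 2 / 6))
    have hkp := keypoly_aux hu1 hu2
    have hkey : 1 - Q ^ 2 ≤ 6 * x ^ 2 * P := by
      rw [hQdef, hPdef]
      nlinarith [hkp, hmul]
    calc Real.exp x * (1 - Real.exp (-(6 * x ^ 2)))
        ≤ Real.exp x * (1 - Q ^ 2) :=
          mul_le_mul_of_nonneg_left (by linarith) (le_of_lt (Real.exp_pos x))
      _ ≤ Real.exp x * (6 * x ^ 2 * P) :=
          mul_le_mul_of_nonneg_left hkey (le_of_lt (Real.exp_pos x))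
      _ = 6 * x ^ 2 * (Real.exp x * P) := by ring
      _ ≤ 6 * x ^ 2 * 1 := mul_le_mul_of_nonneg_left hxP (by positivity)
      _ = 6 * x ^ 2 := by ring
  · rcases le_or_gt x 2 with hcase2 | hcase2
    · -- Case B : 0.65 ≤ x ≤ 2
      apply finish_from
      have h23 : (0:ℝ) < 2.3 - x := by linarith
      have hsh : Real.exp (x - 1.3) * (2.3 - x) ≤ 1 := by
        have h1 : (2.3 - x) ≤ Real.exp (1.3 - x) := by
          have := Real.add_one_le_exp (1.3 - x)
          linarith
        have h2 : Real.exp (x - 1.3) * Real.exp (1.3 - x) = 1 := by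
          rw [← Real.exp_add]; ring_nf; exact Real.exp_zero
        calc Real.exp (x - 1.3) * (2.3 - x) ≤ Real.exp (x - 1.3) * Real.exp (1.3 - x) :=
              mul_le_mul_of_nonneg_left h1 (le_of_lt (Real.exp_pos _))
          _ = 1 := h2
      have he03 : Real.exp 0.3 ≤ 10 / 7 := by
        have h1 : (0.7 : ℝ) ≤ Real.exp (-0.3) := by
          have := Real.add_one_le_exp (-0.3 : ℝ)
          linarith
        have h2 : Real.exp 0.3 * Real.exp (-0.3) = 1 := by
          rw [← Real.exp_add]; norm_num
        nlinarith [Real.exp_pos (0.3 : ℝ)]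
      have he13 : Real.exp 1.3 ≤ 3.8833 := by
        have : Real.exp 1.3 = Real.exp 1 * Real.exp 0.3 := by
          rw [← Real.exp_add]; norm_num
        rw [this]
        nlinarith [Real.exp_pos (0.3:ℝ), Real.exp_pos 1]
      have hx13 : Real.exp x * (2.3 - x) ≤ 3.8833 := by
        have : Real.exp x = Real.exp 1.3 * Real.exp (x - 1.3) := by
          rw [← Real.exp_add]; norm_num
        rw [this]
        calc Real.exp 1.3 * Real.exp (x - 1.3) * (2.3 - x)
            = Real.exp 1.3 * (Real.exp (x - 1.3) * (2.3 - x)) := by ring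
          _ ≤ Real.exp 1.3 * 1 :=
              mul_le_mul_of_nonneg_left hsh (le_of_lt (Real.exp_pos _))
          _ = Real.exp 1.3 := by ring
          _ ≤ 3.8833 := he13
      have hcubic : (3.8833 : ℝ) ≤ 6 * x ^ 2 * (2.3 - x) := by
        nlinarith [mul_nonneg (mul_nonneg (by linarith : (0:ℝ) ≤ x - 0.65)
          (by linarith : (0:ℝ) ≤ 2 - x)) (by linarith : (0:ℝ) ≤ x)]
      nlinarith [h23]
    · -- Case C : 2 < x ≤ L₀
      apply finish_from
      have hψ : AntitoneOn (fun y : ℝ => Real.log (6 * y ^ 2) - y) (Set.Ici 2) := by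
        apply antitoneOn_of_hasDerivWithinAt_nonpos (convex_Ici 2)
          (f' := fun y => 12 * y / (6 * y ^ 2) - 1)
        · intro y hy
          have hy2 : (0:ℝ) < y := lt_of_lt_of_le (by norm_num) hy
          have hne : 6 * y ^ 2 ≠ 0 := by positivity
          exact (((continuous_const.mul (continuous_pow 2)).continuousAt.log hne).sub
            continuousAt_id).continuousWithinAt
        · intro y hy
          rw [interior_Ici] at hy
          have hy2 : (0:ℝ) < y := lt_trans (by norm_num) hy
          have hne : 6 * y ^ 2 ≠ 0 := by positivity
          have hin : HasDerivAt (fun y : ℝ => 6 * y ^ 2) (12 * y) y := by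
            have := (hasDerivAt_pow 2 y).const_mul (6:ℝ)
            exact this.congr_deriv (by ring)
          exact ((hin.log hne).sub (hasDerivAt_id y)).hasDerivWithinAt
        · intro y hy
          rw [interior_Ici] at hy
          have hy2 : (2:ℝ) < y := hy
          have h1 : 12 * y / (6 * y ^ 2) = 2 / y := by
            field_simp; ring
          rw [h1]
          have : 2 / y ≤ 1 := by
            rw [div_le_one (by linarith)]
            linarith
          linarith
      have hx2 : x ∈ Set.Ici (2:ℝ) := le_of_lt hcase2
      have hL2 : L₀ ∈ Set.Ici (2:ℝ) := by
        simp only [Set.mem_Ici]; linarith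
      have hmono := hψ hx2 hL2 hxL
      simp only at hmono
      have hlogL : Real.log (6 * L₀ ^ 2) = L₀ := by
        rw [← hroot, Real.log_exp]
      rw [hlogL] at hmono
      have hlog : x ≤ Real.log (6 * x ^ 2) := by linarith
      have h6x : (0:ℝ) < 6 * x ^ 2 := by positivity
      calc Real.exp x ≤ Real.exp (Real.log (6 * x ^ 2)) := Real.exp_le_exp.mpr hlog
        _ = 6 * x ^ 2 := Real.exp_log h6x
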